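/- In the column sampling model with c samples and sampling probability p (p_j > 0 for all j), the random matrix C·Cᵀ is an unbiased estimator of A·Aᵀ: for every pair of row indices (i, i'), the expectation of the (i,i') entry of C·Cᵀ over the random indices equals the (i,i') entry of A·Aᵀ. -/
import Mathlib


open Finset Matrix

/-- The column-sampled matrix `C ∈ ℝ^{M×c}`: its `t`-th column is
`A^{(ω t)} / √(c * p (ω t))`, where `ω : Fin c → Fin N` records the sampled
column indices. -/
noncomputable def sampledC {M N : ℕ} (A : Matrix (Fin M) (Fin N) ℝ) (c : ℕ)
    (p : Fin N → ℝ) (ω : Fin c → Fin N) : Matrix (Fin M) (Fin c) ℝ :=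
  fun i t => A i (ω t) / Real.sqrt (c * p (ω t))

/-- In the column sampling model (indices drawn i.i.d. with `P[i_t = j] = p j`),
`C * Cᵀ` is an unbiased estimator of `A * Aᵀ`: for every pair of row indices
`(i, i')`, the expectation of the `(i, i')` entry of `C * Cᵀ` equals the
`(i, i')` entry of `A * Aᵀ`. -/
theorem expectation_sampled_CCT_eq_AAT {M N : ℕ} (A : Matrix (Fin M) (Fin N) ℝ)
    (c : ℕ) (hc : 1 ≤ c) (p : Fin N → ℝ) (hp : ∀ j, 0 < p j)
    (hp1 : ∑ j, p j = 1) (i i' : Fin M) :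
    ∑ ω : Fin c → Fin N, (∏ t, p (ω t)) *
        ((sampledC A c p ω) * (sampledC A c p ω)ᵀ) i i'
      = (A * Aᵀ) i i' := by
  have hc0 : (0:ℝ) < c := by exact_mod_cast hc
  -- the entry as a clean sum
  have hentry : ∀ ω : Fin c → Fin N,
      ((sampledC A c p ω) * (sampledC A c p ω)ᵀ) i i'
        = ∑ t, A i (ω t) * A i' (ω t) / (c * p (ω t)) := by
    intro ω
    rw [Matrix.mul_apply]
    refine Finset.sum_congr rfl fun t _ => ?_
    have hpos : (0:ℝ) ≤ c * p (ω t) := le_of_lt (mul_pos hc0 (hp _))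
    simp only [sampledC, Matrix.transpose_apply]
    rw [div_mul_div_comm, Real.mul_self_sqrt hpos]
  have key : ∀ t : Fin c,
      ∑ ω : Fin c → Fin N, (∏ s, p (ω s)) * (A i (ω t) * A i' (ω t) / (c * p (ω t)))
        = (∑ j, A i j * A i' j) / c := by
    intro t
    classical
    have h1 : ∀ ω : Fin c → Fin N,
        (∏ s, p (ω s)) * (A i (ω t) * A i' (ω t) / (c * p (ω t)))
          = ∏ s, (p (ω s) * (if s = t then A i (ω s) * A i' (ω s) / (c * p (ω s)) else 1)) := by
      intro ω
      rw [Finset.prod_mul_distrib, Finset.prod_ite_eq' Finset.univ t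
        (fun s => A i (ω s) * A i' (ω s) / (c * p (ω s)))]
      simp
    calc ∑ ω : Fin c → Fin N, (∏ s, p (ω s)) * (A i (ω t) * A i' (ω t) / (c * p (ω t)))
        = ∑ ω : Fin c → Fin N, ∏ s, (p (ω s) * (if s = t then A i (ω s) * A i' (ω s) / (c * p (ω s)) else 1)) := by
          exact Finset.sum_congr rfl fun ω _ => h1 ω
      _ = ∏ s, ∑ j, (p j * (if s = t then A i j * A i' j / (c * p j) else 1)) := by
          rw [Fintype.prod_sum]
      _ = ∏ s, (if s = t then (∑ j, A i j * A i' j) / c else 1) := by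
          refine Finset.prod_congr rfl fun s _ => ?_
          by_cases hs : s = t
          · simp only [hs, if_true]
            rw [Finset.sum_div]
            refine Finset.sum_congr rfl fun j _ => ?_
            rw [mul_div_assoc', mul_comm (↑c : ℝ) (p j),
              mul_div_mul_left _ _ (hp j).ne']
          · simp [hs, hp1]
      _ = (∑ j, A i j * A i' j) / c := by
          rw [Finset.prod_ite_eq' Finset.univ t (fun _ => (∑ j, A i j * A i' j) / c)]
          simp
  calc ∑ ω : Fin c → Fin N, (∏ s, p (ω s)) *
        ((sampledC A c p ω) * (sampledC A c p ω)ᵀ) i i'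
      = ∑ ω : Fin c → Fin N, ∑ t, (∏ s, p (ω s)) * (A i (ω t) * A i' (ω t) / (c * p (ω t))) := by
        refine Finset.sum_congr rfl fun ω _ => ?_
        rw [hentry ω, Finset.mul_sum]
    _ = ∑ t : Fin c, ∑ ω : Fin c → Fin N, (∏ s, p (ω s)) * (A i (ω t) * A i' (ω t) / (c * p (ω t))) :=
        Finset.sum_comm
    _ = ∑ t : Fin c, (∑ j, A i j * A i' j) / c := Finset.sum_congr rfl fun t _ => key t
    _ = (A * Aᵀ) i i' := by
        rw [Finset.sum_const, Matrix.mul_apply]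
        simp only [Matrix.transpose_apply, Finset.card_univ, Fintype.card_fin, nsmul_eq_mul]
        field_simp
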